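/- Let B ⊆ ℂ^n be a brick partitioned into subbricks β_{i,j} by hyperplanes orthogonal to the real coordinate axes, and let each β_{i,j} be shrunk to a closed subbrick β̃_{i,j} contained in the interior of β_{i,j} by moving each face inward. Then the union B̃ = ⋃_{i,j} β̃_{i,j} is polynomially convex. -/

import Mathlib

namespace BrickAux

open Polynomial Metric Set

/-- `f` is uniformly approximable by polynomials on `K`. -/
def Approx (K : Set ℂ) (f : ℂ → ℂ) : Prop :=
  ∀ ε > 0, ∃ p : Polynomial ℂ, ∀ ζ ∈ K, ‖f ζ - p.eval ζ‖ ≤ ε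

lemma approx_congr {K : Set ℂ} {f g : ℂ → ℂ} (h : ∀ ζ ∈ K, f ζ = g ζ)
    (hf : Approx K f) : Approx K g := by
  intro ε hε
  obtain ⟨p, hp⟩ := hf ε hε
  exact ⟨p, fun ζ hζ => (h ζ hζ) ▸ hp ζ hζ⟩

lemma approx_poly {K : Set ℂ} (p : Polynomial ℂ) : Approx K (fun ζ => p.eval ζ) :=
  fun ε hε => ⟨p, fun ζ _ => by simp [le_of_lt hε]⟩

lemma approx_add {K : Set ℂ} {f g : ℂ → ℂ} (hf : Approx K f) (hg : Approx K g) :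
    Approx K (fun ζ => f ζ + g ζ) := by
  intro ε hε
  obtain ⟨p, hp⟩ := hf (ε/2) (by positivity)
  obtain ⟨q, hq⟩ := hg (ε/2) (by positivity)
  refine ⟨p + q, fun ζ hζ => ?_⟩
  have h1 : f ζ + g ζ - (p + q).eval ζ = (f ζ - p.eval ζ) + (g ζ - q.eval ζ) := by
    simp only [Polynomial.eval_add]; ring
  rw [h1]
  calc ‖(f ζ - p.eval ζ) + (g ζ - q.eval ζ)‖ ≤ ‖f ζ - p.eval ζ‖ + ‖g ζ - q.eval ζ‖ :=
        norm_add_le _ _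
    _ ≤ ε/2 + ε/2 := add_le_add (hp ζ hζ) (hq ζ hζ)
    _ = ε := by ring

lemma approx_const_mul {K : Set ℂ} {f : ℂ → ℂ} (a : ℂ) (hf : Approx K f) :
    Approx K (fun ζ => a * f ζ) := by
  intro ε hε
  have hpos : 0 < ε / (‖a‖ + 1) := by positivity
  obtain ⟨p, hp⟩ := hf _ hpos
  refine ⟨Polynomial.C a * p, fun ζ hζ => ?_⟩
  have h1 : a * f ζ - (Polynomial.C a * p).eval ζ = a * (f ζ - p.eval ζ) := by
    simp only [Polynomial.eval_mul, Polynomial.eval_C]; ring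
  rw [h1, norm_mul]
  calc ‖a‖ * ‖f ζ - p.eval ζ‖ ≤ (‖a‖ + 1) * (ε / (‖a‖ + 1)) := by
        apply mul_le_mul (by linarith [norm_nonneg a]) (hp ζ hζ) (norm_nonneg _) (by positivity)
    _ = ε := by field_simp

lemma approx_mul {K : Set ℂ} {f g : ℂ → ℂ} {F G : ℝ} (hF : 0 ≤ F) (hG : 0 ≤ G)
    (hf : Approx K f) (hg : Approx K g)
    (hbf : ∀ ζ ∈ K, ‖f ζ‖ ≤ F) (hbg : ∀ ζ ∈ K, ‖g ζ‖ ≤ G) :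
    Approx K (fun ζ => f ζ * g ζ) := by
  intro ε hε
  set δ := min 1 (ε / (F + G + 1)) with hδdef
  have hδpos : 0 < δ := lt_min one_pos (by positivity)
  have hδ1 : δ ≤ 1 := min_le_left _ _
  have hδ2 : δ ≤ ε / (F + G + 1) := min_le_right _ _
  obtain ⟨p, hp⟩ := hf δ hδpos
  obtain ⟨q, hq⟩ := hg δ hδpos
  refine ⟨p * q, fun ζ hζ => ?_⟩
  have h1 : f ζ * g ζ - (p * q).eval ζ
      = f ζ * (g ζ - q.eval ζ) + (f ζ - p.eval ζ) * q.eval ζ := by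
    simp only [Polynomial.eval_mul]; ring
  have hqb : ‖q.eval ζ‖ ≤ G + δ := by
    have h2 : q.eval ζ = g ζ - (g ζ - q.eval ζ) := by ring
    rw [h2]
    calc ‖g ζ - (g ζ - q.eval ζ)‖ ≤ ‖g ζ‖ + ‖g ζ - q.eval ζ‖ := norm_sub_le _ _
      _ ≤ G + δ := add_le_add (hbg ζ hζ) (hq ζ hζ)
  rw [h1]
  have key : ‖f ζ * (g ζ - q.eval ζ) + (f ζ - p.eval ζ) * q.eval ζ‖
      ≤ F * δ + δ * (G + δ) := by
    calc ‖f ζ * (g ζ - q.eval ζ) + (f ζ - p.eval ζ) * q.eval ζ‖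
        ≤ ‖f ζ * (g ζ - q.eval ζ)‖ + ‖(f ζ - p.eval ζ) * q.eval ζ‖ := norm_add_le _ _
      _ = ‖f ζ‖ * ‖g ζ - q.eval ζ‖ + ‖f ζ - p.eval ζ‖ * ‖q.eval ζ‖ := by
          rw [norm_mul, norm_mul]
      _ ≤ F * δ + δ * (G + δ) := by
          apply add_le_add
          · exact mul_le_mul (hbf ζ hζ) (hq ζ hζ) (norm_nonneg _) hF
          · exact mul_le_mul (hp ζ hζ) hqb (norm_nonneg _) (le_of_lt hδpos)
  have final : F * δ + δ * (G + δ) ≤ ε := by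
    have h4 : δ * (F + G + 1) ≤ ε := by
      have := (le_div_iff₀ (show (0:ℝ) < F + G + 1 by positivity)).1 hδ2
      linarith
    nlinarith
  linarith

lemma approx_pow {K : Set ℂ} {g : ℂ → ℂ} (hg : Approx K g)
    (hb : ∀ ζ ∈ K, ‖g ζ‖ ≤ 1) : ∀ k : ℕ, Approx K (fun ζ => g ζ ^ k) := by
  intro k
  induction k with
  | zero => exact approx_congr (fun ζ _ => by simp) (approx_poly 1)
  | succ k ih =>
      have hbk : ∀ ζ ∈ K, ‖g ζ ^ k‖ ≤ 1 := fun ζ hζ => by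
        rw [norm_pow]; exact pow_le_one₀ (norm_nonneg _) (hb ζ hζ)
      exact approx_congr (fun ζ _ => by rw [pow_succ])
        (approx_mul zero_le_one zero_le_one ih hg hbk hb)

lemma approx_geom_sum {K : Set ℂ} {g : ℂ → ℂ} (hg : Approx K g)
    (hb : ∀ ζ ∈ K, ‖g ζ‖ ≤ 1) (N : ℕ) :
    Approx K (fun ζ => ∑ k ∈ Finset.range N, g ζ ^ k) := by
  induction N with
  | zero => exact approx_congr (fun ζ _ => by simp) (approx_poly 0)
  | succ N ih =>
      exact approx_congr (fun ζ _ => by rw [Finset.sum_range_succ])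
        (approx_add ih (approx_pow hg hb N))

lemma norm_one_sub_ge {x : ℂ} {ρ : ℝ} (hρ : ρ < 1) (hx : ‖x‖ ≤ ρ) :
    1 - ρ ≤ ‖1 - x‖ := by
  have := norm_sub_norm_le (1 : ℂ) x
  simp only [norm_one] at this
  linarith

lemma approx_geom {K : Set ℂ} {g : ℂ → ℂ} {ρ : ℝ} (hρ0 : 0 ≤ ρ) (hρ : ρ < 1)
    (hg : Approx K g) (hb : ∀ ζ ∈ K, ‖g ζ‖ ≤ ρ) :
    Approx K (fun ζ => (1 - g ζ)⁻¹) := by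
  intro ε hε
  have hb1 : ∀ ζ ∈ K, ‖g ζ‖ ≤ 1 := fun ζ hζ => (hb ζ hζ).trans (le_of_lt hρ)
  have hne : ∀ ζ ∈ K, (1 : ℂ) - g ζ ≠ 0 := by
    intro ζ hζ h
    have := norm_one_sub_ge hρ (hb ζ hζ)
    rw [h, norm_zero] at this
    linarith
  obtain ⟨N, hN⟩ := exists_pow_lt_of_lt_one (show (0:ℝ) < ε/2 * (1 - ρ) by nlinarith) hρ
  obtain ⟨p, hp⟩ := approx_geom_sum hg hb1 N (ε/2) (by positivity)
  refine ⟨p, fun ζ hζ => ?_⟩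
  have hgone : g ζ ≠ 1 := by
    intro h
    exact hne ζ hζ (by rw [h]; ring)
  have hid : (1 - g ζ)⁻¹ - ∑ k ∈ Finset.range N, g ζ ^ k
      = g ζ ^ N * (1 - g ζ)⁻¹ := by
    rw [geom_sum_eq hgone, div_eq_mul_inv,
      show g ζ - 1 = -(1 - g ζ) by ring, inv_neg]
    ring
  have hnorm : ‖(1 - g ζ)⁻¹ - ∑ k ∈ Finset.range N, g ζ ^ k‖ ≤ ε/2 := by
    rw [hid, norm_mul, norm_pow, norm_inv]
    have h1 : ‖g ζ‖ ^ N ≤ ρ ^ N := pow_le_pow_left₀ (norm_nonneg _) (hb ζ hζ) N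
    have h2 : ‖(1:ℂ) - g ζ‖⁻¹ ≤ (1 - ρ)⁻¹ := by
      apply inv_anti₀ (by linarith)
      exact norm_one_sub_ge hρ (hb ζ hζ)
    calc ‖g ζ‖ ^ N * ‖(1:ℂ) - g ζ‖⁻¹ ≤ ρ ^ N * (1 - ρ)⁻¹ := by
          apply mul_le_mul h1 h2 (by positivity) (by positivity)
      _ ≤ ε/2 := by
          rw [mul_inv_le_iff₀ (by linarith)]
          nlinarith
  calc ‖(1 - g ζ)⁻¹ - p.eval ζ‖
      ≤ ‖(1 - g ζ)⁻¹ - ∑ k ∈ Finset.range N, g ζ ^ k‖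
        + ‖(∑ k ∈ Finset.range N, g ζ ^ k) - p.eval ζ‖ := by
        have : (1 - g ζ)⁻¹ - p.eval ζ
            = ((1 - g ζ)⁻¹ - ∑ k ∈ Finset.range N, g ζ ^ k)
              + ((∑ k ∈ Finset.range N, g ζ ^ k) - p.eval ζ) := by ring
        rw [this]; exact norm_add_le _ _
    _ ≤ ε/2 + ε/2 := add_le_add hnorm (hp ζ hζ)
    _ = ε := by ring

lemma approx_inv_base {K : Set ℂ} {R : ℝ} (hR0 : 0 ≤ R) (hR : ∀ ζ ∈ K, ‖ζ‖ ≤ R)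
    {c : ℂ} (hc : R < ‖c‖) : Approx K (fun ζ => (ζ - c)⁻¹) := by
  have hc0 : c ≠ 0 := by
    intro h; rw [h, norm_zero] at hc; linarith
  have hg : Approx K (fun ζ => c⁻¹ * ζ) := by
    have := approx_poly (K := K) (Polynomial.C c⁻¹ * Polynomial.X)
    exact approx_congr (fun ζ _ => by simp) this
  have hb : ∀ ζ ∈ K, ‖c⁻¹ * ζ‖ ≤ R / ‖c‖ := by
    intro ζ hζ
    rw [norm_mul, norm_inv]
    rw [div_eq_inv_mul]
    exact mul_le_mul_of_nonneg_left (hR ζ hζ) (by positivity)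
  have hρ : R / ‖c‖ < 1 := (div_lt_one (by linarith)).2 hc
  have hgeom := approx_geom (div_nonneg hR0 (norm_nonneg _)) hρ hg hb
  have hmul := approx_const_mul (-c⁻¹) hgeom
  apply approx_congr (f := fun ζ => -c⁻¹ * (1 - c⁻¹ * ζ)⁻¹) _ hmul
  intro ζ hζ
  have h1 : (1 : ℂ) - c⁻¹ * ζ ≠ 0 := by
    intro h
    have := norm_one_sub_ge hρ (hb ζ hζ)
    rw [h, norm_zero] at this
    linarith
  have h2 : ζ - c ≠ 0 := by
    intro h
    have h3 : ζ = c := by linear_combination h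
    have := hR ζ hζ
    rw [h3] at this
    linarith
  field_simp
  rw [show c - ζ = -(ζ - c) by ring, div_neg, div_self h2, neg_neg]

lemma approx_inv_step {K : Set ℂ} {c c' : ℂ} {d : ℝ}
    (hd : ∀ ζ ∈ K, d ≤ ‖ζ - c‖) (hcc : ‖c' - c‖ < d)
    (hA : Approx K (fun ζ => (ζ - c)⁻¹)) : Approx K (fun ζ => (ζ - c')⁻¹) := by
  have hd0 : 0 < d := lt_of_le_of_lt (norm_nonneg _) hcc
  have hKne0 : ∀ ζ ∈ K, ζ - c ≠ 0 := by
    intro ζ hζ h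
    have := hd ζ hζ
    rw [h, norm_zero] at this
    linarith
  have hg : Approx K (fun ζ => (c' - c) * (ζ - c)⁻¹) := approx_const_mul _ hA
  set ρ := ‖c' - c‖ / d with hρdef
  have hρ1 : ρ < 1 := (div_lt_one hd0).2 hcc
  have hρ0 : 0 ≤ ρ := div_nonneg (norm_nonneg _) (le_of_lt hd0)
  have hbg : ∀ ζ ∈ K, ‖(c' - c) * (ζ - c)⁻¹‖ ≤ ρ := by
    intro ζ hζ
    rw [norm_mul, norm_inv, hρdef, div_eq_mul_inv]
    apply mul_le_mul_of_nonneg_left _ (norm_nonneg _)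
    exact inv_anti₀ hd0 (hd ζ hζ)
  have hgeom := approx_geom hρ0 hρ1 hg hbg
  have hbinv : ∀ ζ ∈ K, ‖(ζ - c)⁻¹‖ ≤ d⁻¹ := by
    intro ζ hζ
    rw [norm_inv]
    exact inv_anti₀ hd0 (hd ζ hζ)
  have hbgeom : ∀ ζ ∈ K, ‖(1 - (c' - c) * (ζ - c)⁻¹)⁻¹‖ ≤ (1 - ρ)⁻¹ := by
    intro ζ hζ
    rw [norm_inv]
    exact inv_anti₀ (by linarith) (norm_one_sub_ge hρ1 (hbg ζ hζ))
  have hmul := approx_mul (inv_nonneg.2 (le_of_lt hd0))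
    (inv_nonneg.2 (by linarith : (0:ℝ) ≤ 1 - ρ)) hA hgeom hbinv hbgeom
  apply approx_congr (f := fun ζ => (ζ - c)⁻¹ * (1 - (c' - c) * (ζ - c)⁻¹)⁻¹) _ hmul
  intro ζ hζ
  have h0 := hKne0 ζ hζ
  have h1 : (1 : ℂ) - (c' - c) * (ζ - c)⁻¹ ≠ 0 := by
    intro h
    have := norm_one_sub_ge hρ1 (hbg ζ hζ)
    rw [h, norm_zero] at this
    linarith
  field_simp
  congr 1; ring

lemma approx_inv_chain {K : Set ℂ} {R : ℝ} (hR0 : 0 ≤ R) (hR : ∀ ζ ∈ K, ‖ζ‖ ≤ R)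
    {w v : ℂ} {d : ℝ} (hv : ‖v‖ < d)
    (N : ℕ) (hdist : ∀ k : ℕ, k ≤ N → ∀ ζ ∈ K, d ≤ ‖ζ - (w + (k : ℂ) * v)‖)
    (hfar : R < ‖w + (N : ℂ) * v‖) :
    Approx K (fun ζ => (ζ - w)⁻¹) := by
  suffices h : ∀ m : ℕ, m ≤ N → Approx K (fun ζ => (ζ - (w + ((N - m : ℕ) : ℂ) * v))⁻¹) by
    have := h N le_rfl
    simpa using this
  intro m
  induction m with
  | zero =>
      intro _
      simpa using approx_inv_base hR0 hR hfar
  | succ m ih =>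
      intro hm
      have hm' : m ≤ N := Nat.le_of_succ_le hm
      have hcast : ((N - (m+1) : ℕ) : ℂ) = ((N - m : ℕ) : ℂ) - 1 := by
        have h1 : (N - (m+1)) + 1 = N - m := by omega
        have h2 := congrArg (fun k : ℕ => (k : ℂ)) h1
        push_cast at h2
        linear_combination h2
      apply approx_inv_step (c := w + ((N - m : ℕ) : ℂ) * v)
        (d := d) (fun ζ hζ => hdist (N - m) (Nat.sub_le _ _) ζ hζ) ?_ (ih hm')
      have h3 : (w + ((N - (m+1) : ℕ) : ℂ) * v) - (w + ((N - m : ℕ) : ℂ) * v) = -v := by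
        rw [hcast]; ring
      rw [h3, norm_neg]
      exact hv

/-- One-dimensional separation along a ray. -/
lemma approx_inv_of_ray {K : Set ℂ} {R : ℝ} (hR0 : 0 ≤ R) (hR : ∀ ζ ∈ K, ‖ζ‖ ≤ R)
    {w u : ℂ} (hu : ‖u‖ = 1) {δ : ℝ} (hδ : 0 < δ)
    (hdist : ∀ s : ℝ, 0 ≤ s → ∀ ζ ∈ K, δ ≤ ‖ζ - (w + (s : ℂ) * u)‖) :
    Approx K (fun ζ => (ζ - w)⁻¹) := by
  set v : ℂ := ((δ/2 : ℝ) : ℂ) * u with hvdef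
  have hvnorm : ‖v‖ = δ/2 := by
    rw [hvdef, norm_mul, hu, Complex.norm_real, Real.norm_eq_abs, abs_of_pos (by linarith)]
    ring
  obtain ⟨N, hN⟩ := exists_nat_ge ((R + ‖w‖ + 1) / (δ/2))
  apply approx_inv_chain hR0 hR (v := v) (d := δ) (by rw [hvnorm]; linarith) N
  · intro k _ ζ hζ
    have h1 : (k : ℂ) * v = (((k : ℝ) * (δ/2) : ℝ) : ℂ) * u := by
      rw [hvdef]; push_cast; ring
    rw [h1]
    exact hdist _ (by positivity) ζ hζ
  · have h2 : ‖(N : ℂ) * v‖ = (N : ℝ) * (δ/2) := by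
      rw [norm_mul, hvnorm, Complex.norm_natCast]
    have h3 : R + ‖w‖ + 1 ≤ (N : ℝ) * (δ/2) := by
      rw [div_le_iff₀ (by linarith)] at hN
      linarith
    calc R < (N : ℝ) * (δ/2) - ‖w‖ := by linarith
      _ ≤ ‖(N : ℂ) * v‖ - ‖w‖ := by rw [h2]
      _ ≤ ‖w + (N : ℂ) * v‖ := by
          have := norm_sub_norm_le ((N : ℂ) * v) (-w)
          simp only [norm_neg] at this
          calc ‖(N : ℂ) * v‖ - ‖w‖ ≤ ‖(N : ℂ) * v - -w‖ := this
            _ = ‖w + (N : ℂ) * v‖ := by ring_nf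

/-- Separation of a point from a compact "grid" rectangle union `A ×ℂ B`. -/
lemma sep_rect {A B : Set ℝ} (hA : IsCompact A) (hB : IsCompact B) (w : ℂ)
    (hw : w.re ∉ A ∨ w.im ∉ B) :
    ∃ q : Polynomial ℂ, ∀ ζ : ℂ, ζ.re ∈ A → ζ.im ∈ B → ‖q.eval ζ‖ < ‖q.eval w‖ := by
  rcases A.eq_empty_or_nonempty with hA0 | hAne
  · exact ⟨0, fun ζ h1 _ => absurd h1 (by simp [hA0])⟩
  rcases B.eq_empty_or_nonempty with hB0 | hBne
  · exact ⟨0, fun ζ _ h2 => absurd h2 (by simp [hB0])⟩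
  set S : Set ℂ := {ζ : ℂ | ζ.re ∈ A ∧ ζ.im ∈ B} with hSdef
  obtain ⟨Ca, hCa⟩ := isBounded_iff_forall_norm_le.mp hA.isBounded
  obtain ⟨Cb, hCb⟩ := isBounded_iff_forall_norm_le.mp hB.isBounded
  have hCa0 : 0 ≤ Ca := le_trans (norm_nonneg _) (hCa _ hAne.choose_spec)
  have hCb0 : 0 ≤ Cb := le_trans (norm_nonneg _) (hCb _ hBne.choose_spec)
  set R : ℝ := Ca + Cb with hRdef
  have hR0 : 0 ≤ R := by positivity
  have hR : ∀ ζ ∈ S, ‖ζ‖ ≤ R := by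
    intro ζ hζ
    calc ‖ζ‖ = ‖ζ‖ := rfl
      _ ≤ |ζ.re| + |ζ.im| := Complex.norm_le_abs_re_add_abs_im ζ
      _ ≤ Ca + Cb := by
          have h1 := hCa _ hζ.1
          have h2 := hCb _ hζ.2
          rw [Real.norm_eq_abs] at h1 h2
          linarith
  -- main: approximability of (ζ - w)⁻¹ on S
  have happrox : Approx S (fun ζ => (ζ - w)⁻¹) := by
    rcases hw with hw | hw
    · -- move vertically
      have hδpos : 0 < infDist w.re A := (hA.isClosed.notMem_iff_infDist_pos hAne).mp hw
      set δ := infDist w.re A with hδdef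
      apply approx_inv_of_ray hR0 hR (u := Complex.I) Complex.norm_I hδpos
      intro t ht ζ hζ
      have hre : (ζ - (w + (t : ℂ) * Complex.I)).re = ζ.re - w.re := by
        simp [Complex.sub_re, Complex.add_re, Complex.mul_re]
      calc δ ≤ dist w.re ζ.re := infDist_le_dist_of_mem hζ.1
        _ = |ζ.re - w.re| := by rw [Real.dist_eq, abs_sub_comm]
        _ = |(ζ - (w + (t : ℂ) * Complex.I)).re| := by rw [hre]
        _ ≤ ‖ζ - (w + (t : ℂ) * Complex.I)‖ := Complex.abs_re_le_norm _
        _ = ‖ζ - (w + (t : ℂ) * Complex.I)‖ := rfl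
    · -- move horizontally
      have hδpos : 0 < infDist w.im B := (hB.isClosed.notMem_iff_infDist_pos hBne).mp hw
      set δ := infDist w.im B with hδdef
      apply approx_inv_of_ray hR0 hR (u := (1 : ℂ)) norm_one hδpos
      intro t ht ζ hζ
      have him : (ζ - (w + (t : ℂ) * 1)).im = ζ.im - w.im := by
        simp [Complex.sub_im, Complex.add_im]
      calc δ ≤ dist w.im ζ.im := infDist_le_dist_of_mem hζ.2
        _ = |ζ.im - w.im| := by rw [Real.dist_eq, abs_sub_comm]
        _ = |(ζ - (w + (t : ℂ) * 1)).im| := by rw [him]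
        _ ≤ ‖ζ - (w + (t : ℂ) * 1)‖ := Complex.abs_im_le_norm _
        _ = ‖ζ - (w + (t : ℂ) * 1)‖ := rfl
  -- now build the separating polynomial
  set C : ℝ := R + ‖w‖ with hCdef
  have hC0 : 0 ≤ C := by positivity
  have hCb' : ∀ ζ ∈ S, ‖ζ - w‖ ≤ C := by
    intro ζ hζ
    calc ‖ζ - w‖ ≤ ‖ζ‖ + ‖w‖ := norm_sub_le _ _
      _ ≤ R + ‖w‖ := by linarith [hR ζ hζ]
  obtain ⟨p, hp⟩ := happrox ((2 * (C + 1))⁻¹) (by positivity)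
  refine ⟨1 - (Polynomial.X - Polynomial.C w) * p, fun ζ h1 h2 => ?_⟩
  have hζS : ζ ∈ S := ⟨h1, h2⟩
  have hζw : ζ - w ≠ 0 := by
    intro h
    have h3 : ζ = w := by linear_combination h
    rcases hw with hw | hw
    · exact hw (h3 ▸ h1)
    · exact hw (h3 ▸ h2)
  have heval : (1 - (Polynomial.X - Polynomial.C w) * p).eval ζ
      = (ζ - w) * ((ζ - w)⁻¹ - p.eval ζ) := by
    simp only [Polynomial.eval_sub, Polynomial.eval_one, Polynomial.eval_mul,
      Polynomial.eval_X, Polynomial.eval_C]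
    field_simp
  have hevalw : (1 - (Polynomial.X - Polynomial.C w) * p).eval w = 1 := by
    simp
  rw [heval, hevalw, norm_one, norm_mul]
  calc ‖ζ - w‖ * ‖(ζ - w)⁻¹ - p.eval ζ‖ ≤ C * (2 * (C + 1))⁻¹ := by
        apply mul_le_mul (hCb' ζ hζS) (hp ζ hζS) (norm_nonneg _) hC0
    _ < 1 := by
        rw [mul_inv_lt_iff₀ (by positivity)]
        nlinarith

end BrickAux


/-- A compact set `K ⊆ ℂ^n` is polynomially convex if for every `z ∉ K` there is a
holomorphic polynomial `p` with `|p(z)| > |p(ζ)|` for all `ζ ∈ K`. -/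
def PolyConvex {n : ℕ} (K : Set (Fin n → ℂ)) : Prop :=
  IsCompact K ∧ ∀ z ∉ K, ∃ p : MvPolynomial (Fin n) ℂ,
    ∀ w ∈ K, ‖MvPolynomial.eval w p‖ < ‖MvPolynomial.eval z p‖

/-- A stratification of a brick is polynomially convex.  The brick
`B = {z : lamx t 0 ≤ Re z_t ≤ lamx t (r t + 1), lamy t 0 ≤ Im z_t ≤ lamy t (s t + 1)}`
is partitioned into subbricks `β_{i,j}` by the grid hyperplanes
`Re z_t = lamx t i` (`0 ≤ i ≤ r t + 1`) and `Im z_t = lamy t j` (`0 ≤ j ≤ s t + 1`),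
and each subbrick is shrunk to `β̃_{i,j}` with faces moved strictly inward to the
primed coordinates.  The union `B̃ = ⋃ β̃_{i,j}` is polynomially convex. -/
theorem polyConvex_stratification (n : ℕ) (r s : Fin n → ℕ)
    (lamx lamx' lamx'' lamy lamy' lamy'' : Fin n → ℕ → ℝ)
    (hx : ∀ t, ∀ i ≤ r t, lamx t i < lamx t (i + 1))
    (hy : ∀ t, ∀ j ≤ s t, lamy t j < lamy t (j + 1))
    (hx' : ∀ t, ∀ i ≤ r t,
      lamx t i < lamx' t i ∧ lamx' t i ≤ lamx'' t (i + 1) ∧ lamx'' t (i + 1) < lamx t (i + 1))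
    (hy' : ∀ t, ∀ j ≤ s t,
      lamy t j < lamy' t j ∧ lamy' t j ≤ lamy'' t (j + 1) ∧ lamy'' t (j + 1) < lamy t (j + 1)) :
    PolyConvex (⋃ i ∈ {i : Fin n → ℕ | ∀ t, i t ≤ r t},
      ⋃ j ∈ {j : Fin n → ℕ | ∀ t, j t ≤ s t},
        {z : Fin n → ℂ | ∀ t,
          lamx' t (i t) ≤ (z t).re ∧ (z t).re ≤ lamx'' t (i t + 1) ∧
          lamy' t (j t) ≤ (z t).im ∧ (z t).im ≤ lamy'' t (j t + 1)}) := by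
  
  classical
  set A : Fin n → Set ℝ := fun t => ⋃ i ∈ Set.Iic (r t), Set.Icc (lamx' t i) (lamx'' t (i+1))
    with hAdef
  set B : Fin n → Set ℝ := fun t => ⋃ j ∈ Set.Iic (s t), Set.Icc (lamy' t j) (lamy'' t (j+1))
    with hBdef
  have hAcomp : ∀ t, IsCompact (A t) := fun t =>
    (Set.finite_Iic _).isCompact_biUnion (fun i _ => isCompact_Icc)
  have hBcomp : ∀ t, IsCompact (B t) := fun t =>
    (Set.finite_Iic _).isCompact_biUnion (fun j _ => isCompact_Icc)
  have hKeq : (⋃ i ∈ {i : Fin n → ℕ | ∀ t, i t ≤ r t},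
      ⋃ j ∈ {j : Fin n → ℕ | ∀ t, j t ≤ s t},
        {z : Fin n → ℂ | ∀ t,
          lamx' t (i t) ≤ (z t).re ∧ (z t).re ≤ lamx'' t (i t + 1) ∧
          lamy' t (j t) ≤ (z t).im ∧ (z t).im ≤ lamy'' t (j t + 1)})
      = {z : Fin n → ℂ | ∀ t, (z t).re ∈ A t ∧ (z t).im ∈ B t} := by
    ext z
    simp only [Set.mem_iUnion, Set.mem_setOf_eq, hAdef, hBdef, Set.mem_Iic, Set.mem_Icc]
    constructor
    · rintro ⟨i, hi, j, hj, hz⟩ t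
      obtain ⟨h1, h2, h3, h4⟩ := hz t
      exact ⟨⟨i t, hi t, h1, h2⟩, ⟨j t, hj t, h3, h4⟩⟩
    · intro h
      choose i hi hi1 hi2 using fun t => (h t).1
      choose j hj hj1 hj2 using fun t => (h t).2
      exact ⟨i, hi, j, hj, fun t => ⟨hi1 t, hi2 t, hj1 t, hj2 t⟩⟩
  rw [hKeq]
  set S : Fin n → Set ℂ := fun t => {c : ℂ | c.re ∈ A t ∧ c.im ∈ B t} with hSdef
  have hScomp : ∀ t, IsCompact (S t) := by
    intro t
    apply Metric.isCompact_of_isClosed_isBounded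
    · exact ((hAcomp t).isClosed.preimage Complex.continuous_re).inter
        ((hBcomp t).isClosed.preimage Complex.continuous_im)
    · obtain ⟨Ca, hCa⟩ := isBounded_iff_forall_norm_le.mp (hAcomp t).isBounded
      obtain ⟨Cb, hCb⟩ := isBounded_iff_forall_norm_le.mp (hBcomp t).isBounded
      apply isBounded_iff_forall_norm_le.mpr
      refine ⟨Ca + Cb, fun c hc => ?_⟩
      calc ‖c‖ ≤ |c.re| + |c.im| := Complex.norm_le_abs_re_add_abs_im c
        _ ≤ Ca + Cb := by
            have h1 := hCa _ hc.1
            have h2 := hCb _ hc.2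
            rw [Real.norm_eq_abs] at h1 h2
            linarith
  have hpi : {z : Fin n → ℂ | ∀ t, (z t).re ∈ A t ∧ (z t).im ∈ B t}
      = Set.pi Set.univ S := by
    ext z
    simp [Set.mem_pi, hSdef]
  constructor
  · rw [hpi]
    exact isCompact_univ_pi hScomp
  · intro z hz
    simp only [Set.mem_setOf_eq, not_forall] at hz
    obtain ⟨t, ht⟩ := hz
    rw [not_and_or] at ht
    obtain ⟨q, hq⟩ := BrickAux.sep_rect (hAcomp t) (hBcomp t) (z t) ht
    refine ⟨Polynomial.eval₂ (MvPolynomial.C : ℂ →+* MvPolynomial (Fin n) ℂ)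
      (MvPolynomial.X t) q, fun w hw => ?_⟩
    have key : ∀ v : Fin n → ℂ,
        MvPolynomial.eval v (Polynomial.eval₂ (MvPolynomial.C : ℂ →+* MvPolynomial (Fin n) ℂ)
          (MvPolynomial.X t) q) = q.eval (v t) := by
      intro v
      rw [Polynomial.hom_eval₂]
      have h1 : (MvPolynomial.eval v).comp (MvPolynomial.C : ℂ →+* MvPolynomial (Fin n) ℂ)
          = RingHom.id ℂ := by
        ext a; simp
      rw [h1]
      rw [MvPolynomial.eval_X]; rfl
    rw [key w, key z]
    exact hq (w t) (hw t).1 (hw t).2
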